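/- Pushforward density through an affine coupling layer. Fix D ≥ 2 and 1 ≤ k < D, let s, t : ℝ^k → ℝ^{D−k} be continuously differentiable, and let f : ℝ^D → ℝ^D be the affine coupling layer f(x)_{1:k} = x_{1:k}, f(x)_{k+1:D} = x_{k+1:D} ⊙ exp(s(x_{1:k})) + t(x_{1:k}). Let ν be a probability measure on ℝ^D with density p with respect to Lebesgue measure. Then the pushforward f_*ν has density y ↦ p(f⁻¹(y)) · exp( − Σ_{j=1}^{D−k} s_j(y_{1:k}) ) with respect to Lebesgue measure, where f⁻¹(y) = (y_{1:k}, (y_{k+1:D} − t(y_{1:k})) ⊙ exp(−s(y_{1:k}))). -/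

import Mathlib

open MeasureTheory ENNReal

lemma map_affine_scale {n : ℕ} (e c : Fin n → ℝ) :
    Measure.map (fun b : Fin n → ℝ => fun j => b j * Real.exp (e j) + c j) volume
      = ENNReal.ofReal (Real.exp (-(∑ j, e j))) • volume := by
  set L : (Fin n → ℝ) →L[ℝ] (Fin n → ℝ) :=
    LinearMap.toContinuousLinearMap (Matrix.toLin' (Matrix.diagonal fun j => Real.exp (e j))) with hL
  have hLapp : ∀ b : Fin n → ℝ, L b = fun j => b j * Real.exp (e j) := by
    intro b
    funext j
    simp [hL, Matrix.toLin'_apply, Matrix.mulVec_diagonal, mul_comm]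
  have hdet : L.det = Real.exp (∑ j, e j) := by
    have : L.det = LinearMap.det (Matrix.toLin' (Matrix.diagonal fun j => Real.exp (e j))) := by
      simp [hL, ContinuousLinearMap.det]
    rw [this, LinearMap.det_toLin', Matrix.det_diagonal, Real.exp_sum]
  set φ : (Fin n → ℝ) → (Fin n → ℝ) := fun b => fun j => b j * Real.exp (e j) + c j with hφ
  have hderiv : ∀ x : Fin n → ℝ, HasFDerivAt φ L x := by
    intro x
    have h1 : HasFDerivAt (fun b => L b + c) L x := (L.hasFDerivAt).add_const c
    convert h1 using 2 with b
    funext j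
    simp [hφ, hLapp]
  have hmeas : Measurable φ := by fun_prop
  have hinj : Function.Injective φ := by
    intro a b hab
    funext j
    have := congrFun hab j
    simp only [hφ] at this
    have he : Real.exp (e j) ≠ 0 := Real.exp_ne_zero _
    field_simp at this
    exact mul_right_cancel₀ he (by linarith)
  have hsurj : Function.Surjective φ := by
    intro y
    refine ⟨fun j => (y j - c j) * Real.exp (-(e j)), ?_⟩
    funext j
    simp [hφ, Real.exp_neg, mul_assoc, inv_mul_cancel₀ (Real.exp_ne_zero (e j))]
  have key := map_withDensity_abs_det_fderiv_eq_addHaar (volume : Measure (Fin n → ℝ))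
      (MeasurableSet.univ : MeasurableSet (Set.univ : Set (Fin n → ℝ))).nullMeasurableSet (f := φ) (f' := fun _ => L)
      (fun x _ => (hderiv x).hasFDerivWithinAt) (hinj.injOn)
  simp only [Set.image_univ, hsurj.range_eq, Measure.restrict_univ, hdet] at key
  have habs : |Real.exp (∑ j, e j)| = Real.exp (∑ j, e j) := abs_of_pos (Real.exp_pos _)
  rw [habs, withDensity_const] at key
  rw [Measure.map_smul] at key
  have hc : (ENNReal.ofReal (Real.exp (∑ j, e j))) ≠ 0 := by
    simp [ENNReal.ofReal_eq_zero, not_le, Real.exp_pos]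
  have hc' : (ENNReal.ofReal (Real.exp (∑ j, e j))) ≠ ⊤ := ENNReal.ofReal_ne_top
  have : Measure.map φ volume = (ENNReal.ofReal (Real.exp (∑ j, e j)))⁻¹ • volume := by
    calc Measure.map φ volume
        = (ENNReal.ofReal (Real.exp (∑ j, e j)))⁻¹ •
            (ENNReal.ofReal (Real.exp (∑ j, e j)) • Measure.map φ volume) := by
          rw [smul_smul, ENNReal.inv_mul_cancel hc hc', one_smul]
      _ = (ENNReal.ofReal (Real.exp (∑ j, e j)))⁻¹ • volume := by rw [key]
  rw [this, Real.exp_neg, ENNReal.ofReal_inv_of_pos (Real.exp_pos _)]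

theorem affine_coupling_pushforward_density
    (D k : ℕ) (hD : 2 ≤ D) (hk1 : 1 ≤ k) (hkD : k < D)
    (s t : (Fin k → ℝ) → (Fin (D - k) → ℝ))
    (hs : ContDiff ℝ 1 s) (ht : ContDiff ℝ 1 t)
    (f : (Fin k → ℝ) × (Fin (D - k) → ℝ) → (Fin k → ℝ) × (Fin (D - k) → ℝ))
    (hf : ∀ x, f x = (x.1, fun j => x.2 j * Real.exp (s x.1 j) + t x.1 j))
    (ν : Measure ((Fin k → ℝ) × (Fin (D - k) → ℝ))) [IsProbabilityMeasure ν]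
    (p : (Fin k → ℝ) × (Fin (D - k) → ℝ) → ℝ)
    (hp_meas : Measurable p) (hp_nonneg : ∀ x, 0 ≤ p x)
    (hν : ν = volume.withDensity (fun x => ENNReal.ofReal (p x))) :
    Measure.map f ν
      = volume.withDensity (fun y =>
          ENNReal.ofReal
            (p (y.1, fun j => (y.2 j - t y.1 j) * Real.exp (-(s y.1 j)))
              * Real.exp (-(∑ j, s y.1 j)))) := by
  have hsm : Measurable s := hs.continuous.measurable
  have htm : Measurable t := ht.continuous.measurable
  have hfe : f = fun x => (x.1, fun j => x.2 j * Real.exp (s x.1 j) + t x.1 j) := funext hf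
  have hfm : Measurable f := by
    rw [hfe]
    exact measurable_fst.prodMk (measurable_pi_lambda _ fun j =>
      ((measurable_pi_apply j).comp measurable_snd).mul
        (Real.measurable_exp.comp ((measurable_pi_apply j).comp (hsm.comp measurable_fst))) |>.add
        ((measurable_pi_apply j).comp (htm.comp measurable_fst)))
  set ψ : (Fin k → ℝ) → (Fin (D - k) → ℝ) → (Fin (D - k) → ℝ) :=
    fun a c => fun j => (c j - t a j) * Real.exp (-(s a j)) with hψdef
  have hψm : ∀ a, Measurable (ψ a) := fun a => measurable_pi_lambda _ fun j =>
    ((measurable_pi_apply j).sub measurable_const).mul measurable_const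
  have hinv : ∀ a b, ψ a (fun j => b j * Real.exp (s a j) + t a j) = b := by
    intro a b
    funext j
    simp only [hψdef, add_sub_cancel_right, Real.exp_neg, mul_assoc,
      mul_inv_cancel₀ (Real.exp_ne_zero _), mul_one]
  refine Measure.ext fun A hA => ?_
  set F : (Fin k → ℝ) × (Fin (D - k) → ℝ) → ℝ≥0∞ :=
    fun y => A.indicator (fun _ => (1 : ℝ≥0∞)) y with hFdef
  have hFm : Measurable F := measurable_const.indicator hA
  have hind : ∀ (g : (Fin k → ℝ) × (Fin (D - k) → ℝ) → ℝ≥0∞)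
      (x : (Fin k → ℝ) × (Fin (D - k) → ℝ)),
      A.indicator g x = F x * g x := by
    intro g x
    by_cases hx : x ∈ A <;> simp [hFdef, Set.indicator, hx]
  rw [hν, Measure.map_apply hfm hA, withDensity_apply _ (hfm hA), withDensity_apply _ hA,
    ← lintegral_indicator (hfm hA), ← lintegral_indicator hA]
  have hLind : ∀ x, (f ⁻¹' A).indicator (fun x => ENNReal.ofReal (p x)) x
      = F (f x) * ENNReal.ofReal (p x) := by
    intro x
    by_cases hx : f x ∈ A <;> simp [hFdef, Set.indicator, hx, Set.mem_preimage]
  simp only [hLind, hind]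
  rw [Measure.volume_eq_prod, lintegral_prod, lintegral_prod]
  · refine lintegral_congr fun a => ?_
    set G : (Fin (D - k) → ℝ) → ℝ≥0∞ :=
      fun c => F (a, c) * ENNReal.ofReal (p (a, ψ a c)) with hGdef
    have hGm : Measurable G := by
      refine ((hFm.comp (measurable_prodMk_left)).mul ?_)
      exact (ENNReal.measurable_ofReal.comp (hp_meas.comp
        (measurable_const.prodMk (hψm a))))
    have hφm : Measurable (fun b : Fin (D - k) → ℝ => fun j => b j * Real.exp (s a j) + t a j) := by
      exact measurable_pi_lambda _ fun j => ((measurable_pi_apply j).mul measurable_const).add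
        measurable_const
    calc ∫⁻ b, F (f (a, b)) * ENNReal.ofReal (p (a, b)) ∂volume
        = ∫⁻ (b : Fin (D - k) → ℝ), G (fun j => b j * Real.exp (s a j) + t a j) ∂volume := by
          refine lintegral_congr fun b => ?_
          rw [hGdef]
          simp only [hfe, hinv a b]
      _ = ∫⁻ c, G c ∂(Measure.map (fun b : Fin (D - k) → ℝ =>
            fun j => b j * Real.exp (s a j) + t a j) volume) :=
          (lintegral_map hGm hφm).symm
      _ = ENNReal.ofReal (Real.exp (-(∑ j, s a j))) * ∫⁻ c, G c ∂volume := by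
          rw [map_affine_scale (s a) (t a), lintegral_smul_measure, smul_eq_mul]
      _ = ∫⁻ c, F (a, c) * ENNReal.ofReal
            (p (a, fun j => (c j - t a j) * Real.exp (-(s a j))) * Real.exp (-(∑ j, s a j)))
            ∂volume := by
          rw [← lintegral_const_mul' _ _ ENNReal.ofReal_ne_top]
          refine lintegral_congr fun c => ?_
          rw [hGdef, ENNReal.ofReal_mul (hp_nonneg _)]
          ring
  · refine Measurable.aemeasurable ?_
    refine (hFm.mul ?_)
    refine ENNReal.measurable_ofReal.comp (hp_meas.comp ?_ |>.mul ?_)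
    · exact measurable_fst.prodMk (measurable_pi_lambda _ fun j =>
        (((measurable_pi_apply j).comp measurable_snd).sub
          ((measurable_pi_apply j).comp (htm.comp measurable_fst))).mul
          ((Real.measurable_exp.comp (((measurable_pi_apply j).comp
            (hsm.comp measurable_fst)).neg))))
    · exact Real.measurable_exp.comp ((Finset.measurable_sum _ fun j _ =>
        (measurable_pi_apply j).comp (hsm.comp measurable_fst)).neg)
  · exact ((hFm.comp hfm).mul (ENNReal.measurable_ofReal.comp hp_meas)).aemeasurable
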